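/- Let x be an infinite reduced word in F₂ and define δ(γ⁻¹·x, x) = 3^{−b_x(γ)} and the weighted measure |A|_x = Σ 3^{−b_x(γ)} over γ⁻¹·x ∈ A. Set A_n^x = {γ⁻¹·x : 0 ≤ b_x(γ) = d(1,γ) ≤ n}. Then |A_n^x|_x = n + 1, while the weighted boundary satisfies |∂A_n^x|_x = 2; hence |∂A_n^x|_x / |A_n^x|_x → 0, i.e., (A_n^x) is a δ-averaging (δ-Følner) sequence. -/

import Mathlib

open Filter Topology

namespace Stmt12Aux

abbrev Ltr := Bool × Bool

def linv (l : Ltr) : Ltr := (l.1, !l.2)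

def Rel (a b : Ltr) : Prop := b ≠ linv a

lemma rel_iff : ∀ a b : Ltr, (a.1 = b.1 ∧ a.2 = !b.2) ↔ b = linv a := by decide

lemma linv_linv : ∀ a : Ltr, linv (linv a) = a := by decide

lemma rel_linv_iff (a b : Ltr) : Rel (linv a) b ↔ b ≠ a := by
  show b ≠ linv (linv a) ↔ b ≠ a
  rw [linv_linv]

lemma reduce_eq_self : ∀ {L : List Ltr}, L.Chain' Rel → FreeGroup.reduce L = L := by
  intro L
  induction L with
  | nil => intro _; rfl
  | cons a L ih =>
    intro h
    have hL := ih h.tail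
    rw [FreeGroup.reduce.cons, hL]
    cases L with
    | nil => rfl
    | cons hd tl =>
      have hc : ¬(a.1 = hd.1 ∧ a.2 = !hd.2) := by
        rw [rel_iff]; exact (List.isChain_cons_cons.mp h).1
      simp [hc]

lemma chain'_of_reduce : ∀ {L : List Ltr}, FreeGroup.reduce L = L → L.Chain' Rel := by
  intro L
  induction L with
  | nil => intro _; exact List.isChain_nil
  | cons a L ih =>
    intro h
    rw [FreeGroup.reduce.cons] at h
    cases hrl : FreeGroup.reduce L with
    | nil =>
      rw [hrl] at h
      have h2 : [] = L := by injection h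
      subst h2
      exact List.IsChain.singleton a
    | cons hd tl =>
      rw [hrl] at h
      by_cases hc : a.1 = hd.1 ∧ a.2 = !hd.2
      · exfalso
        simp only [hc, if_true] at h
        have h1 : (FreeGroup.reduce L).length ≤ L.length :=
          FreeGroup.Red.length_le (FreeGroup.reduce.red)
        rw [hrl] at h1
        have := congrArg List.length h
        simp at this h1
        omega
      · simp only [hc, if_false] at h
        have h2 : hd :: tl = L := by injection h
        subst h2
        exact List.isChain_cons_cons.mpr ⟨(rel_iff a hd |>.not.mp hc :), ih hrl⟩

def stp (p : Ltr) : Fin 3 → Ltr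
  | 0 => p
  | 1 => (!p.1, false)
  | 2 => (!p.1, true)

lemma stp_ne : ∀ (p : Ltr) (c : Fin 3), stp p c ≠ linv p := by decide

lemma stp_inj : ∀ (p : Ltr) (c c' : Fin 3), stp p c = stp p c' → c = c' := by decide

lemma stp_surj : ∀ (p l : Ltr), l ≠ linv p → ∃ c, stp p c = l := by decide

def build (p : Ltr) : List (Fin 3) → List Ltr
  | [] => []
  | c :: cs => stp p c :: build (stp p c) cs

lemma build_length (p : Ltr) (cs : List (Fin 3)) : (build p cs).length = cs.length := by
  induction cs generalizing p with
  | nil => rfl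
  | cons c cs ih => simp [build, ih]

lemma build_chain (p : Ltr) (cs : List (Fin 3)) : List.Chain Rel p (build p cs) := by
  induction cs generalizing p with
  | nil => exact List.Chain.nil
  | cons c cs ih => exact List.Chain.cons (stp_ne p c) (ih _)

lemma build_chain' (p : Ltr) (cs : List (Fin 3)) : (build p cs).Chain' Rel :=
  (show List.Chain' Rel (p :: build p cs) from build_chain p cs).tail

lemma build_inj (p : Ltr) : ∀ (cs cs' : List (Fin 3)), build p cs = build p cs' → cs = cs' := by
  intro cs
  induction cs generalizing p with
  | nil => intro cs' h; cases cs' with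
    | nil => rfl
    | cons c cs' => exact absurd h (by simp [build])
  | cons c cs ih =>
    intro cs' h
    cases cs' with
    | nil => exact absurd h (by simp [build])
    | cons c' cs'' =>
      simp only [build, List.cons.injEq] at h
      obtain ⟨h1, h2⟩ := h
      have hc : c = c' := stp_inj p c c' h1
      subst hc
      rw [ih (stp p c) cs'' h2]

lemma build_surj (p : Ltr) (w : List Ltr) (h : List.Chain Rel p w) :
    ∃ cs, build p cs = w := by
  induction w generalizing p with
  | nil => exact ⟨[], rfl⟩
  | cons hd tl ih =>
    replace h := List.isChain_cons_cons.mp h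
    obtain ⟨c, hc⟩ := stp_surj p hd h.1
    obtain ⟨cs, hcs⟩ := ih hd h.2
    exact ⟨c :: cs, by rw [build, hc, hcs]⟩

lemma toWord_mk_build (p : Ltr) (cs : List (Fin 3)) :
    (FreeGroup.mk (build p cs)).toWord = build p cs := by
  rw [FreeGroup.toWord_mk, reduce_eq_self (build_chain' p cs)]

noncomputable def Tf (x0 : Ltr) (k : ℕ) : Finset (FreeGroup Bool) :=
  (Finset.univ : Finset (Fin k → Fin 3)).image fun c =>
    FreeGroup.mk (build (linv x0) (List.ofFn c))

lemma mem_Tf (x0 : Ltr) (k : ℕ) (γ : FreeGroup Bool) :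
    γ ∈ Tf x0 k ↔ γ.toWord.length = k ∧ γ.toWord.head? ≠ some x0 := by
  constructor
  · intro h
    obtain ⟨c, -, rfl⟩ := Finset.mem_image.mp h
    rw [toWord_mk_build]
    refine ⟨by rw [build_length, List.length_ofFn], ?_⟩
    intro hh
    cases hb : build (linv x0) (List.ofFn c) with
    | nil => rw [hb] at hh; simp at hh
    | cons hd tl =>
      rw [hb] at hh
      simp only [List.head?_cons, Option.some.injEq] at hh
      have := build_chain (linv x0) (List.ofFn c)
      rw [hb] at this
      replace this := List.isChain_cons_cons.mp this
      exact (rel_linv_iff x0 hd).mp this.1 hh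
  · rintro ⟨hlen, hhd⟩
    have hch' : γ.toWord.Chain' Rel := chain'_of_reduce (FreeGroup.reduce_toWord γ)
    have hch : List.Chain Rel (linv x0) γ.toWord := by
      cases hu : γ.toWord with
      | nil => exact List.Chain.nil
      | cons hd tl =>
        rw [hu] at hhd hch'
        refine List.chain_cons.mpr ⟨(rel_linv_iff x0 hd).mpr ?_, hch'⟩
        intro hx; exact hhd (by rw [hx]; rfl)
    obtain ⟨cs, hcs⟩ := build_surj _ _ hch
    have hlcs : cs.length = k := by
      rw [← hlen, ← hcs, build_length]
    subst hlcs
    refine Finset.mem_image.mpr ⟨fun i : Fin cs.length => cs[(i : ℕ)], Finset.mem_univ _, ?_⟩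
    rw [List.ofFn_getElem, hcs]; exact FreeGroup.mk_toWord

lemma card_Tf (x0 : Ltr) (k : ℕ) : (Tf x0 k).card = 3 ^ k := by
  rw [Tf, Finset.card_image_of_injective _ ?_, Finset.card_univ]
  · simp
  · intro c c' h
    have := congrArg FreeGroup.toWord h
    rw [toWord_mk_build, toWord_mk_build] at this
    exact List.ofFn_injective (build_inj _ _ _ this)

end Stmt12Aux

open Stmt12Aux

/-- The sets A_n^x = {γ⁻¹·x : 0 ≤ b_x(γ) = d(1,γ) ≤ n} (encoded by their group elements)
have weighted measure |A_n^x|_x = n + 1, their boundaries ∂A_n^x = {1} ∪ (A_n^x ∩ H_n(x))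
have weighted measure 2 (for n ≥ 1), hence the isoperimetric ratio tends to 0:
(A_n^x) is a δ-averaging (δ-Følner) sequence. -/
theorem stmt12
    (d : FreeGroup Bool → FreeGroup Bool → ℕ)
    (hd : ∀ g h, d g h = ((g⁻¹ * h).toWord).length)
    (x : ℕ → Bool × Bool)
    (hred : ∀ n, x (n + 1) ≠ ((x n).1, !(x n).2))
    (b : FreeGroup Bool → ℤ)
    (hb : ∀ γ : FreeGroup Bool,
      Tendsto (fun n => (d γ (FreeGroup.mk (List.ofFn fun i : Fin n => x i)) : ℤ) -
          (d 1 (FreeGroup.mk (List.ofFn fun i : Fin n => x i)) : ℤ))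
        atTop (𝓝 (b γ)))
    (A : ℕ → Set (FreeGroup Bool))
    (hA : ∀ n, A n = {γ | b γ = (d 1 γ : ℤ) ∧ d 1 γ ≤ n}) :
    (∀ n : ℕ, (∑ᶠ γ ∈ A n, (3 : ℝ) ^ (-(b γ))) = n + 1) ∧
      (∀ n : ℕ, 1 ≤ n →
        (∑ᶠ γ ∈ ({1} ∪ {γ ∈ A n | b γ = (n : ℤ)} : Set (FreeGroup Bool)),
          (3 : ℝ) ^ (-(b γ))) = 2) ∧
      Tendsto (fun n : ℕ =>
          (∑ᶠ γ ∈ ({1} ∪ {γ ∈ A n | b γ = (n : ℤ)} : Set (FreeGroup Bool)),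
            (3 : ℝ) ^ (-(b γ))) / ∑ᶠ γ ∈ A n, (3 : ℝ) ^ (-(b γ)))
        atTop (𝓝 0) := by
  have hw : ∀ n, (List.ofFn fun i : Fin n => x i).Chain' Rel := by
    intro n
    refine List.isChain_ofFn.mpr ?_
    intro i hi
    exact hred i
  have hd1 : ∀ γ : FreeGroup Bool, d 1 γ = γ.toWord.length := by
    intro γ; rw [hd]; simp
  have hdw : ∀ n, d 1 (FreeGroup.mk (List.ofFn fun i : Fin n => x i)) = n := by
    intro n
    rw [hd1, FreeGroup.toWord_mk, reduce_eq_self (hw n), List.length_ofFn]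
  have keyA : ∀ γ : FreeGroup Bool, γ.toWord.head? ≠ some (x 0) →
      b γ = γ.toWord.length := by
    intro γ hγ
    have hconst : ∀ n, (d γ (FreeGroup.mk (List.ofFn fun i : Fin n => x i)) : ℤ)
        - (d 1 (FreeGroup.mk (List.ofFn fun i : Fin n => x i)) : ℤ)
        = (γ.toWord.length : ℤ) := by
      intro n
      have hchain : (FreeGroup.invRev γ.toWord ++ List.ofFn fun i : Fin n => x i).Chain' Rel := by
        apply List.IsChain.append
        · have := chain'_of_reduce (FreeGroup.reduce_toWord γ⁻¹)
          rwa [FreeGroup.toWord_inv] at this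
        · exact hw n
        · intro y hy z hz
          rw [FreeGroup.invRev, List.getLast?_reverse, List.head?_map] at hy
          cases hu : γ.toWord.head? with
          | none => rw [hu] at hy; simp at hy
          | some h =>
            rw [hu] at hy
            simp only [Option.map_some, Option.mem_def, Option.some.injEq] at hy
            subst hy
            cases n with
            | zero => simp at hz
            | succ m =>
              rw [List.ofFn_succ] at hz
              simp only [List.head?_cons, Option.mem_def, Option.some.injEq] at hz
              subst hz
              show Rel (linv h) (x 0)
              exact (rel_linv_iff h (x 0)).mpr (fun hh => hγ (by rw [hu, hh]))
      have hmul : γ⁻¹ * FreeGroup.mk (List.ofFn fun i : Fin n => x i)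
          = FreeGroup.mk (FreeGroup.invRev γ.toWord ++ List.ofFn fun i : Fin n => x i) := by
        rw [← FreeGroup.mul_mk, ← FreeGroup.inv_mk, FreeGroup.mk_toWord]
      rw [hdw n, hd, hmul, FreeGroup.toWord_mk, reduce_eq_self hchain]
      push_cast [List.length_append, FreeGroup.invRev_length, List.length_ofFn]
      ring
    have h1 := hb γ
    rw [funext hconst] at h1
    exact tendsto_nhds_unique h1 tendsto_const_nhds
  have keyB : ∀ γ : FreeGroup Bool, γ.toWord.head? = some (x 0) →
      b γ ≤ (γ.toWord.length : ℤ) - 2 := by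
    intro γ hγ
    cases hu : γ.toWord with
    | nil => rw [hu] at hγ; simp at hγ
    | cons hd u' =>
    rw [hu] at hγ
    simp only [List.head?_cons, Option.some.injEq] at hγ
    subst hγ
    apply le_of_tendsto (hb γ)
    rw [Filter.eventually_atTop]
    refine ⟨1, fun n hn => ?_⟩
    obtain ⟨k, rfl⟩ := Nat.exists_eq_add_of_le' hn
    have hγeq : γ = FreeGroup.mk [x 0] * FreeGroup.mk u' := by
      conv_lhs => rw [← FreeGroup.mk_toWord (x := γ), hu]
      rw [FreeGroup.mul_mk]
      rfl
    have hwn : FreeGroup.mk (List.ofFn fun i : Fin (k+1) => x i)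
        = FreeGroup.mk [x 0] * FreeGroup.mk (List.ofFn fun i : Fin k => x (i+1)) := by
      rw [FreeGroup.mul_mk, List.ofFn_succ]
      rfl
    have hle : d γ (FreeGroup.mk (List.ofFn fun i : Fin (k+1) => x i)) ≤ u'.length + k := by
      rw [hd]
      have hmm : γ⁻¹ * FreeGroup.mk (List.ofFn fun i : Fin (k+1) => x i)
          = (FreeGroup.mk u')⁻¹ * FreeGroup.mk (List.ofFn fun i : Fin k => x (i+1)) := by
        rw [hγeq, hwn]
        group
      rw [hmm]
      calc ((FreeGroup.mk u')⁻¹ * FreeGroup.mk (List.ofFn fun i : Fin k => x (i+1))).toWord.length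
          = FreeGroup.norm ((FreeGroup.mk u')⁻¹ * FreeGroup.mk (List.ofFn fun i : Fin k => x (i+1))) := rfl
        _ ≤ FreeGroup.norm (FreeGroup.mk u')⁻¹
            + FreeGroup.norm (FreeGroup.mk (List.ofFn fun i : Fin k => x (i+1))) :=
            FreeGroup.norm_mul_le _ _
        _ = FreeGroup.norm (FreeGroup.mk u')
            + FreeGroup.norm (FreeGroup.mk (List.ofFn fun i : Fin k => x (i+1))) := by
            rw [FreeGroup.norm_inv_eq]
        _ ≤ u'.length + k :=
            add_le_add FreeGroup.norm_mk_le (le_trans FreeGroup.norm_mk_le (by simp))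
    have hlen : γ.toWord.length = u'.length + 1 := by rw [hu]; simp
    rw [hdw]
    simp only [List.length_cons]
    omega
  have hmemA : ∀ n (γ : FreeGroup Bool),
      γ ∈ A n ↔ γ.toWord.length ≤ n ∧ γ.toWord.head? ≠ some (x 0) := by
    intro n γ
    rw [hA]
    simp only [Set.mem_setOf_eq, hd1]
    constructor
    · rintro ⟨hbd, hln⟩
      refine ⟨hln, fun hh => ?_⟩
      have := keyB γ hh
      omega
    · rintro ⟨hln, hh⟩
      exact ⟨keyA γ hh, hln⟩
  have hsumT : ∀ k, (∑ γ ∈ Tf (x 0) k, (3:ℝ) ^ (-(b γ))) = 1 := by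
    intro k
    have hcg : ∀ γ ∈ Tf (x 0) k, (3:ℝ) ^ (-(b γ)) = (3:ℝ) ^ (-(k:ℤ)) := by
      intro γ hγ
      obtain ⟨hl, hh⟩ := (mem_Tf _ _ _).mp hγ
      rw [keyA γ hh, hl]
    rw [Finset.sum_congr rfl hcg, Finset.sum_const, card_Tf, nsmul_eq_mul]
    push_cast
    rw [← zpow_natCast (3:ℝ) k, ← zpow_add₀ (by norm_num : (3:ℝ) ≠ 0)]
    simp
  have claim1 : ∀ n : ℕ, (∑ᶠ γ ∈ A n, (3:ℝ) ^ (-(b γ))) = n + 1 := by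
    intro n
    have hset : A n = ↑((Finset.range (n+1)).biUnion (Tf (x 0))) := by
      ext γ
      rw [hmemA n γ]
      simp only [Finset.coe_biUnion, Finset.mem_coe, Finset.mem_biUnion, Finset.mem_range,
        Set.mem_iUnion, mem_Tf, Nat.lt_succ_iff]
      constructor
      · rintro ⟨hl, hh⟩; exact ⟨_, hl, rfl, hh⟩
      · rintro ⟨k, hk, hl, hh⟩; exact ⟨hl ▸ hk, hh⟩
    rw [hset, finsum_mem_coe_finset, Finset.sum_biUnion ?disj]
    · rw [Finset.sum_congr rfl (fun k _ => hsumT k), Finset.sum_const, Finset.card_range,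
        nsmul_eq_mul]
      push_cast
      ring
    case disj =>
      intro k hk l hl hkl
      refine Finset.disjoint_left.mpr fun γ hγk hγl => ?_
      have h1 := ((mem_Tf _ _ _).mp hγk).1
      have h2 := ((mem_Tf _ _ _).mp hγl).1
      exact hkl (by rw [← h1, ← h2])
  have hb1 : b 1 = 0 := by
    have h0 := keyA 1 (by rw [FreeGroup.toWord_one]; simp)
    rw [FreeGroup.toWord_one] at h0
    simpa using h0
  have claim2 : ∀ n : ℕ, 1 ≤ n →
      (∑ᶠ γ ∈ ({1} ∪ {γ ∈ A n | b γ = (n : ℤ)} : Set (FreeGroup Bool)),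
        (3 : ℝ) ^ (-(b γ))) = 2 := by
    intro n hn
    have hbset : ({1} ∪ {γ ∈ A n | b γ = (n:ℤ)} : Set (FreeGroup Bool))
        = ↑(insert (1 : FreeGroup Bool) (Tf (x 0) n)) := by
      ext γ
      simp only [Set.mem_union, Set.mem_singleton_iff, Set.mem_setOf_eq, Finset.coe_insert,
        Set.mem_insert_iff, Finset.mem_coe]
      constructor
      · rintro (rfl | ⟨hAn, hbn⟩)
        · left; rfl
        · right
          obtain ⟨hl, hh⟩ := (hmemA n γ).mp hAn
          rw [mem_Tf]
          refine ⟨?_, hh⟩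
          have := keyA γ hh
          omega
      · rintro (rfl | hT)
        · left; rfl
        · right
          obtain ⟨hl, hh⟩ := (mem_Tf _ _ _).mp hT
          exact ⟨(hmemA n γ).mpr ⟨le_of_eq hl, hh⟩, by rw [keyA γ hh, hl]⟩
    have h1nT : (1 : FreeGroup Bool) ∉ Tf (x 0) n := by
      intro h
      have := ((mem_Tf _ _ _).mp h).1
      rw [FreeGroup.toWord_one] at this
      simp at this
      omega
    rw [hbset, finsum_mem_coe_finset, Finset.sum_insert h1nT, hsumT n, hb1]
    norm_num
  refine ⟨claim1, claim2, ?_⟩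
  have hbase : Tendsto (fun n : ℕ => (2:ℝ) / ((n : ℝ) + 1)) atTop (𝓝 0) := by
    apply Tendsto.div_atTop tendsto_const_nhds
    exact tendsto_atTop_add_const_right _ 1 tendsto_natCast_atTop_atTop
  apply hbase.congr'
  rw [Filter.eventuallyEq_iff_exists_mem]
  refine ⟨{n | 1 ≤ n}, Filter.mem_atTop 1, fun n hn => ?_⟩
  simp only [claim2 n hn, claim1 n]
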